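/- In the Böttcher setting with δ > 0 such that U_δ[0] ⊂ V: the collection E_δ of all finite nonempty subsets of (B_δ°∖{z0}) ∩ (ℚ+iℚ) on which every iterate f^n is injective is dense in the complete metric space (K(B_δ), d_{K(B_δ)}) of nonempty compact subsets of B_δ with the Hausdorff distance, and the collection K(B_δ°∖{z0}) of nonempty compact subsets of B_δ°∖{z0} is open and dense in (K(B_δ), d_{K(B_δ)}). -/

import Mathlib

open Set Filter Topology Function Metric TopologicalSpace

noncomputable section

/-- The chordal metric on the Riemann sphere `ℂ_∞ = OnePoint ℂ`. -/
def chordal (x y : OnePoint ℂ) : ℝ :=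
  Option.elim x (Option.elim y 0 fun w => 2 / Real.sqrt (1 + ‖w‖ ^ 2))
    fun z => Option.elim y (2 / Real.sqrt (1 + ‖z‖ ^ 2))
      fun w => 2 * ‖z - w‖ / (Real.sqrt (1 + ‖z‖ ^ 2) * Real.sqrt (1 + ‖w‖ ^ 2))

/-- The chordal distance from a point of the Riemann sphere to a set of points. -/
def chordalDistSet (x : OnePoint ℂ) (S : Set (OnePoint ℂ)) : ℝ :=
  sInf (chordal x '' S)

/-- `M ⊆ ℂ` has no holes iff `ℂ_∞ ∖ M` is connected. -/
def NoHoles (M : Set ℂ) : Prop :=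
  IsConnected (((↑) '' M : Set (OnePoint ℂ))ᶜ)

/-- The boundary `∂_∞ Ω` of `Ω ⊆ ℂ` taken in the Riemann sphere. -/
def sphereBoundary (Ω : Set ℂ) : Set (OnePoint ℂ) :=
  frontier ((↑) '' Ω)

/-- `U_0(M)`: the nonempty open subsets of `M` having no holes. -/
def U0 (M : Set ℂ) : Set (Set ℂ) :=
  {U | U.Nonempty ∧ IsOpen U ∧ U ⊆ M ∧ NoHoles U}

/-- `K_0(M)`: the nonempty compact subsets of `M` having no holes. -/
def K0 (M : Set ℂ) : Set (Set ℂ) :=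
  {K | K.Nonempty ∧ IsCompact K ∧ K ⊆ M ∧ NoHoles K}

/-- `H(D)`: holomorphic functions on `D`, with the topology of locally uniform
convergence on `D` (induced from the compact-open topology on `C(D, ℂ)`). -/
def HolFun (D : Set ℂ) : Type := {g : ℂ → ℂ // DifferentiableOn ℂ g D}

instance (D : Set ℂ) : TopologicalSpace (HolFun D) :=
  TopologicalSpace.induced
    (fun g : HolFun D => (⟨D.restrict g.1, g.2.continuousOn.restrict⟩ : C(D, ℂ)))
    inferInstance

/-- The orbit `{g ∘ f^n |_U : n ∈ ℕ}` is dense in `H(U)`,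
i.e. `g` is `H(U)`-universal for the composition operator `C_f`. -/
def DenseOrbitIn (g f : ℂ → ℂ) (U : Set ℂ) : Prop :=
  Dense {h : HolFun U | ∃ n : ℕ, Set.EqOn h.1 (g ∘ f^[n]) U}

/-- In the Böttcher setting, the compact neighbourhood `B_δ = φ⁻¹(U_δ[0])` of the
superattracting fixed point. -/
def Bdelta (U : Set ℂ) (φ : ℂ → ℂ) (δ : ℝ) : Set ℂ :=
  {z ∈ U | φ z ∈ Metric.closedBall (0 : ℂ) δ}

/-- The Gaussian rationals `ℚ + iℚ`. -/
def ratGauss : Set ℂ := {z : ℂ | ∃ q r : ℚ, z = (q : ℂ) + (r : ℂ) * Complex.I}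

lemma dense_ratGauss : Dense ratGauss := by
  rw [Metric.dense_iff]
  intro x ε hε
  obtain ⟨q, hq⟩ := exists_rat_near x.re (by positivity : (0:ℝ) < ε/2)
  obtain ⟨r, hr⟩ := exists_rat_near x.im (by positivity : (0:ℝ) < ε/2)
  refine ⟨(q : ℂ) + (r : ℂ) * Complex.I, ?_, q, r, rfl⟩
  rw [Metric.mem_ball, Complex.dist_eq]
  calc ‖(q : ℂ) + (r : ℂ) * Complex.I - x‖
      ≤ |((q : ℂ) + (r : ℂ) * Complex.I - x).re| + |((q : ℂ) + (r : ℂ) * Complex.I - x).im| :=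
        Complex.norm_le_abs_re_add_abs_im _
    _ < ε := by
        simp only [Complex.sub_re, Complex.sub_im, Complex.add_re, Complex.add_im,
          Complex.mul_re, Complex.mul_im, Complex.I_re, Complex.I_im, Complex.ofReal_re,
          Complex.ofReal_im, Complex.ratCast_re, Complex.ratCast_im]
        rw [abs_sub_comm x.re] at hq
        rw [abs_sub_comm x.im] at hr
        ring_nf
        ring_nf at hq hr ⊢
        linarith

/-- Key density lemma: near any point of `B_δ` and avoiding finitely many values of `‖φ ·‖`,
one can find a Gaussian rational point of `interior B_δ \ {z0}`. -/
lemma keypoint (z0 : ℂ) (U V : Set ℂ) (hU : IsOpen U)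
    (φ : ℂ → ℂ) (hφd : DifferentiableOn ℂ φ U) (hφb : Set.BijOn φ U V)
    (hφ0 : φ z0 = 0) (δ : ℝ) (hδ : 0 < δ) (x : ℂ) (hx : x ∈ Bdelta U φ δ) (r : ℝ) (hr : 0 < r) (C : Finset ℝ) :
    ∃ z : ℂ, z ∈ ((interior (Bdelta U φ δ) \ {z0}) ∩ ratGauss) ∧ dist z x < r ∧
      ‖φ z‖ ∉ (C : Set ℝ) := by
  -- the local open mapping property of φ
  have hopen : ∀ y ∈ U, 𝓝 (φ y) ≤ map φ (𝓝 y) := by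
    intro y hy
    have ha : AnalyticAt ℂ φ y := hφd.analyticAt (hU.mem_nhds hy)
    rcases ha.eventually_constant_or_nhds_le_map_nhds with h | h
    · exfalso
      obtain ⟨ρ, hρ, hball⟩ := Metric.eventually_nhds_iff_ball.mp (h.and (hU.eventually_mem hy))
      have h1 : y + (ρ/2 : ℝ) ∈ Metric.ball y ρ := by
        rw [Metric.mem_ball, dist_eq_norm]
        simp only [add_sub_cancel_left]
        rw [Complex.norm_real, Real.norm_eq_abs, abs_of_pos (by linarith : (0:ℝ) < ρ/2)]
        linarith
      obtain ⟨h2, h3⟩ := hball _ h1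
      have := hφb.injOn h3 hy h2
      have : ((ρ/2 : ℝ) : ℂ) = 0 := by
        have := congrArg (· - y) this
        simpa using this
      rw [Complex.ofReal_eq_zero] at this
      linarith
    · exact h
  have hφcont : ContinuousOn φ U := hφd.continuousOn
  -- the open set O1 between ball-preimage and B_δ
  set B := Bdelta U φ δ with hBdef
  have hBU : B ⊆ U := fun z hz => hz.1
  set O1 : Set ℂ := U ∩ φ ⁻¹' (Metric.ball (0:ℂ) δ) with hO1def
  have hO1open : IsOpen O1 := hφcont.isOpen_inter_preimage hU Metric.isOpen_ball
  have hO1B : O1 ⊆ B := fun z hz => ⟨hz.1, Metric.ball_subset_closedBall hz.2⟩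
  have hO1int : O1 ⊆ interior B := interior_maximal hO1B hO1open
  -- step 1: find w ∈ O1 with φ w ≠ 0, dist w x < r
  have hN : φ '' (Metric.ball x r ∩ U) ∈ 𝓝 (φ x) :=
    hopen x hx.1 (Filter.image_mem_map (inter_mem (Metric.ball_mem_nhds x hr) (hU.mem_nhds hx.1)))
  have hT : φ x ∈ interior (φ '' (Metric.ball x r ∩ U)) := mem_interior_iff_mem_nhds.mpr hN
  have hclos : φ x ∈ closure (Metric.ball (0:ℂ) δ) := by
    rw [_root_.closure_ball 0 hδ.ne']
    exact hx.2
  have hne : (interior (φ '' (Metric.ball x r ∩ U)) ∩ Metric.ball (0:ℂ) δ).Nonempty := by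
    rw [_root_.mem_closure_iff] at hclos
    exact hclos _ isOpen_interior hT
  obtain ⟨w', hw'1, hw'2⟩ :=
    (dense_compl_singleton (0:ℂ)).inter_open_nonempty _
      (isOpen_interior.inter Metric.isOpen_ball) hne
  obtain ⟨hw'T, hw'δ⟩ := hw'1
  obtain ⟨w, ⟨hwball, hwU⟩, hww'⟩ := interior_subset hw'T
  have hwO1 : w ∈ O1 := ⟨hwU, by rw [Set.mem_preimage, hww']; exact hw'δ⟩
  have hwz0 : w ≠ z0 := by
    intro h
    apply hw'2
    rw [← hww', h, hφ0]; rfl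
  have hwW : w ∈ interior B \ {z0} := ⟨hO1int hwO1, hwz0⟩
  -- step 2: a small ball around w inside (interior B \ {z0}) ∩ ball x r
  have hΩopen : IsOpen ((interior B \ {z0}) ∩ Metric.ball x r) :=
    (isOpen_interior.sdiff isClosed_singleton).inter Metric.isOpen_ball
  obtain ⟨ρ, hρ, hρsub⟩ := Metric.isOpen_iff.mp hΩopen w ⟨hwW, hwball⟩
  have hρU : Metric.ball w ρ ⊆ U := fun y hy => hBU (interior_subset (hρsub hy).1.1)
  -- step 3: find v in ball w ρ with ‖φ v‖ ∉ C
  have hN2 : φ '' Metric.ball w ρ ∈ 𝓝 (φ w) := hopen w (hρU (Metric.mem_ball_self hρ))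
    (Filter.image_mem_map (Metric.ball_mem_nhds w hρ))
  obtain ⟨s, hs, hssub⟩ := Metric.mem_nhds_iff.mp hN2
  -- choose τ ∈ (0, s) with ‖φ w‖ + τ ∉ C
  have hinf : (Set.Ioo (0:ℝ) s \ ((fun t => ‖φ w‖ + t) ⁻¹' (C : Set ℝ))).Infinite :=
    (Set.Ioo_infinite hs).diff
      (Set.Finite.preimage ((add_right_injective ‖φ w‖).injOn) C.finite_toSet)
  obtain ⟨τ, ⟨hτ0, hτs⟩, hτC⟩ := hinf.nonempty
  set u : ℂ := if φ w = 0 then 1 else ‖φ w‖⁻¹ • φ w with hu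
  have hu1 : ‖u‖ = 1 := by
    rw [hu]
    split_ifs with h
    · simp
    · rw [norm_smul, norm_inv, norm_norm, inv_mul_cancel₀ (norm_ne_zero_iff.mpr h)]
  set q : ℂ := φ w + (τ : ℝ) • u with hq
  have hqnorm : ‖q‖ = ‖φ w‖ + τ := by
    rw [hq, hu]
    split_ifs with h
    · simp [h, norm_smul, abs_of_pos hτ0]
    · rw [smul_smul]
      have : φ w + (τ * ‖φ w‖⁻¹) • φ w = (1 + τ * ‖φ w‖⁻¹) • φ w := by
        rw [add_smul, one_smul]
      rw [this, norm_smul]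
      have hφw : (0:ℝ) < ‖φ w‖ := norm_pos_iff.mpr h
      rw [Real.norm_eq_abs, abs_of_pos (by positivity)]
      rw [add_mul, one_mul, mul_assoc, inv_mul_cancel₀ hφw.ne', mul_one, add_comm]
  have hqball : q ∈ Metric.ball (φ w) s := by
    rw [Metric.mem_ball, dist_eq_norm, hq]
    simp only [add_sub_cancel_left]
    rw [norm_smul, hu1, Real.norm_eq_abs, abs_of_pos hτ0]
    simpa using hτs
  obtain ⟨v, hvball, hvq⟩ := hssub hqball
  have hvC : ‖φ v‖ ∉ (C : Set ℝ) := by rw [hvq, hqnorm]; exact hτC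
  -- step 4: the good set is open and nonempty; pick a Gaussian rational point
  set G : Set ℂ := Metric.ball w ρ ∩ φ ⁻¹' {c : ℂ | ‖c‖ ∉ (C : Set ℝ)} with hG
  have hGopen : IsOpen G := by
    apply (hφcont.mono hρU).isOpen_inter_preimage Metric.isOpen_ball
    have : {c : ℂ | ‖c‖ ∉ (C : Set ℝ)} = (norm ⁻¹' (C : Set ℝ))ᶜ := rfl
    rw [this]
    exact (C.finite_toSet.isClosed.preimage continuous_norm).isOpen_compl
  have hGne : G.Nonempty := ⟨v, hvball, hvC⟩
  obtain ⟨z, hzG, hzrat⟩ := dense_ratGauss.inter_open_nonempty _ hGopen hGne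
  have hzρ := hρsub hzG.1
  exact ⟨z, ⟨hzρ.1, hzrat⟩, Metric.mem_ball.mp hzρ.2, hzG.2⟩

/-- Böttcher setting: the collection `E_δ` of finite nonempty subsets of
`(B_δ° ∖ {z0}) ∩ (ℚ+iℚ)` on which every iterate of `f` is injective is dense in
the space `K(B_δ)` of nonempty compact subsets of `B_δ` with the Hausdorff
distance, and the collection `K(B_δ° ∖ {z0})` is open and dense in `K(B_δ)`. -/
theorem Edelta_dense_and_K_interior_open_dense
    (z0 : ℂ) (U V : Set ℂ) (hU : IsOpen U) (hV : IsOpen V)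
    (hz0U : z0 ∈ U) (h0V : (0 : ℂ) ∈ V) (hV1 : V ⊆ Metric.ball (0 : ℂ) 1)
    (f : ℂ → ℂ) (hf : DifferentiableOn ℂ f U) (hfU : MapsTo f U U)
    (hfix : f z0 = z0) (hder : deriv f z0 = 0)
    (hnc : ¬ ∃ c : ℂ, ∀ z ∈ U, f z = c)
    (p : ℕ) (hp : 2 ≤ p)
    (φ : ℂ → ℂ) (hφd : DifferentiableOn ℂ φ U) (hφb : Set.BijOn φ U V)
    (hφ0 : φ z0 = 0) (hconj : ∀ z ∈ U, φ (f z) = (φ z) ^ p)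
    (δ : ℝ) (hδ : 0 < δ) (hδV : Metric.closedBall (0 : ℂ) δ ⊆ V) :
    Dense {K : NonemptyCompacts ↥(Bdelta U φ δ) |
        (K : Set ↥(Bdelta U φ δ)).Finite ∧
        (∀ z ∈ (K : Set ↥(Bdelta U φ δ)),
          (z : ℂ) ∈ (interior (Bdelta U φ δ) \ {z0}) ∩ ratGauss) ∧
        ∀ n : ℕ, Set.InjOn (f^[n]) ((↑) '' (K : Set ↥(Bdelta U φ δ)) : Set ℂ)} ∧
    IsOpen {K : NonemptyCompacts ↥(Bdelta U φ δ) |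
        ∀ z ∈ (K : Set ↥(Bdelta U φ δ)), (z : ℂ) ∈ interior (Bdelta U φ δ) \ {z0}} ∧
    Dense {K : NonemptyCompacts ↥(Bdelta U φ δ) |
        ∀ z ∈ (K : Set ↥(Bdelta U φ δ)), (z : ℂ) ∈ interior (Bdelta U φ δ) \ {z0}} := by
  set B := Bdelta U φ δ with hBdef
  have hBU : B ⊆ U := fun z hz => hz.1
  -- δ < 1
  have hδ1 : δ < 1 := by
    have h1 : (δ : ℂ) ∈ Metric.closedBall (0:ℂ) δ := by
      rw [Metric.mem_closedBall, dist_zero_right, Complex.norm_real, Real.norm_eq_abs,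
        abs_of_pos hδ]
    have := hV1 (hδV h1)
    rw [Metric.mem_ball, dist_zero_right, Complex.norm_real, Real.norm_eq_abs,
      abs_of_pos hδ] at this
    exact this
  -- f preserves B, and the iterate formula
  have hfB : ∀ z ∈ B, f z ∈ B ∧ φ (f z) = (φ z) ^ p := by
    intro z hz
    have hzU := hBU hz
    have h1 : φ (f z) = (φ z) ^ p := hconj z hzU
    refine ⟨⟨hfU hzU, ?_⟩, h1⟩
    rw [Metric.mem_closedBall, dist_zero_right, h1, norm_pow]
    calc ‖φ z‖ ^ p ≤ δ ^ p := by
          apply pow_le_pow_left₀ (norm_nonneg _) _ p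
          have := hz.2
          rwa [Metric.mem_closedBall, dist_zero_right] at this
      _ ≤ δ ^ 1 := pow_le_pow_of_le_one hδ.le hδ1.le (by omega)
      _ = δ := pow_one δ
  have hiter : ∀ n : ℕ, ∀ z ∈ B, f^[n] z ∈ B ∧ φ (f^[n] z) = (φ z) ^ (p ^ n) := by
    intro n
    induction n with
    | zero => intro z hz; simp [hz]
    | succ n ih =>
      intro z hz
      obtain ⟨h1, h2⟩ := ih z hz
      obtain ⟨h3, h4⟩ := hfB _ h1
      rw [Function.iterate_succ_apply']
      refine ⟨h3, ?_⟩
      rw [h4, h2, ← pow_mul, pow_succ]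
  -- the net construction
  have hnet : ∀ (r : ℝ), 0 < r → ∀ T : Finset ↥B, ∃ S : Finset ↥B,
      (∀ t ∈ T, ∃ z ∈ S, dist t z < r) ∧ (∀ z ∈ S, ∃ t ∈ T, dist z t < r) ∧
      (∀ z ∈ S, (z : ℂ) ∈ (interior B \ {z0}) ∩ ratGauss) ∧
      Set.InjOn (fun z : ↥B => ‖φ (z : ℂ)‖) ↑S := by
    intro r hr T
    classical
    induction T using Finset.induction_on with
    | empty => exact ⟨∅, by simp, by simp, by simp, by simp⟩
    | @insert t T htT ih =>
      obtain ⟨S, h1, h2, h3, h4⟩ := ih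
      obtain ⟨z, hzW, hzd, hzC⟩ :=
        keypoint z0 U V hU φ hφd hφb hφ0 δ hδ (↑t) t.2 r hr
          (S.image (fun z : ↥B => ‖φ (z : ℂ)‖))
      have hzB : z ∈ B := interior_subset hzW.1.1
      refine ⟨insert ⟨z, hzB⟩ S, ?_, ?_, ?_, ?_⟩
      · intro t' ht'
        rcases Finset.mem_insert.mp ht' with h | h
        · exact ⟨⟨z, hzB⟩, Finset.mem_insert_self _ _, by
            rw [h, Subtype.dist_eq, dist_comm]; exact hzd⟩
        · obtain ⟨z', hz'S, hz'd⟩ := h1 t' h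
          exact ⟨z', Finset.mem_insert_of_mem hz'S, hz'd⟩
      · intro z' hz'
        rcases Finset.mem_insert.mp hz' with h | h
        · exact ⟨t, Finset.mem_insert_self _ _, by rw [h, Subtype.dist_eq]; exact hzd⟩
        · obtain ⟨t', ht'T, ht'd⟩ := h2 z' h
          exact ⟨t', Finset.mem_insert_of_mem ht'T, ht'd⟩
      · intro z' hz'
        rcases Finset.mem_insert.mp hz' with h | h
        · rw [h]; exact hzW
        · exact h3 z' h
      · have hne : ∀ c ∈ S, ‖φ (c : ℂ)‖ ≠ ‖φ z‖ := by
          intro c hc hEq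
          apply hzC
          rw [← hEq]
          exact Finset.mem_coe.mpr (Finset.mem_image_of_mem _ hc)
        intro a ha b hb hab
        simp only [Finset.coe_insert, Set.mem_insert_iff, Finset.mem_coe] at ha hb
        have h5 : ‖φ (a : ℂ)‖ = ‖φ (b : ℂ)‖ := hab
        rcases ha with ha | ha <;> rcases hb with hb | hb
        · rw [ha, hb]
        · exfalso
          rw [ha] at h5
          exact hne b hb ((show ‖φ z‖ = ‖φ (b : ℂ)‖ from h5).symm)
        · exfalso
          rw [hb] at h5
          exact hne a ha (show ‖φ (a : ℂ)‖ = ‖φ z‖ from h5)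
        · exact h4 ha hb hab
  -- Part 1: density of E_δ
  have hdense1 : Dense {K : NonemptyCompacts ↥B |
      (K : Set ↥B).Finite ∧
      (∀ z ∈ (K : Set ↥B), (z : ℂ) ∈ (interior B \ {z0}) ∩ ratGauss) ∧
      ∀ n : ℕ, Set.InjOn (f^[n]) ((↑) '' (K : Set ↥B) : Set ℂ)} := by
    rw [Metric.dense_iff]
    intro K r hr
    obtain ⟨T₀, hT₀K, hT₀fin, hT₀cover⟩ :=
      K.isCompact.finite_cover_balls (show (0:ℝ) < r/4 by linarith)
    classical
    obtain ⟨S, h1, h2, h3, h4⟩ := hnet (r/4) (by linarith) hT₀fin.toFinset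
    -- S is nonempty
    obtain ⟨x0, hx0⟩ := K.nonempty
    have hx0' := hT₀cover hx0
    simp only [Set.mem_iUnion, exists_prop] at hx0'
    obtain ⟨t0, ht0, hx0t⟩ := hx0'
    obtain ⟨zz, hzzS, _⟩ := h1 t0 (hT₀fin.mem_toFinset.mpr ht0)
    have hSne : ((S : Set ↥B)).Nonempty := ⟨zz, Finset.mem_coe.mpr hzzS⟩
    set L : NonemptyCompacts ↥B := ⟨⟨(S : Set ↥B), S.finite_toSet.isCompact⟩, hSne⟩ with hL
    have hd : hausdorffDist (K : Set ↥B) (S : Set ↥B) ≤ r/2 := by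
      apply hausdorffDist_le_of_mem_dist (by linarith : (0:ℝ) ≤ r/2)
      · intro x hx
        have := hT₀cover hx
        simp only [Set.mem_iUnion, exists_prop] at this
        obtain ⟨t, htT, hxt⟩ := this
        obtain ⟨z, hzS, hzd⟩ := h1 t (hT₀fin.mem_toFinset.mpr htT)
        refine ⟨z, Finset.mem_coe.mpr hzS, ?_⟩
        calc dist x z ≤ dist x t + dist t z := dist_triangle _ _ _
          _ ≤ r/2 := by
              rw [Metric.mem_ball] at hxt
              linarith
      · intro z hz
        obtain ⟨t, htT, htd⟩ := h2 z (Finset.mem_coe.mp hz)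
        exact ⟨t, hT₀K (hT₀fin.mem_toFinset.mp htT), by linarith⟩
    refine ⟨L, ?_, S.finite_toSet, fun z hz => h3 z (Finset.mem_coe.mp hz), ?_⟩
    · rw [Metric.mem_ball, NonemptyCompacts.dist_eq]
      calc hausdorffDist (L : Set ↥B) (K : Set ↥B)
          = hausdorffDist (K : Set ↥B) (S : Set ↥B) := hausdorffDist_comm
        _ ≤ r/2 := hd
        _ < r := by linarith
    · intro n x hx y hy hxy
      obtain ⟨a, haS, rfl⟩ := hx
      obtain ⟨b, hbS, rfl⟩ := hy
      have hA := (hiter n (↑a) a.2).2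
      have hB := (hiter n (↑b) b.2).2
      have hpow : (φ (a:ℂ)) ^ (p ^ n) = (φ (b:ℂ)) ^ (p ^ n) := by
        rw [← hA, ← hB, hxy]
      have hnorm : ‖φ (a:ℂ)‖ ^ (p ^ n) = ‖φ (b:ℂ)‖ ^ (p ^ n) := by
        rw [← norm_pow, ← norm_pow, hpow]
      have hab : a = b := h4 haS hbS
        ((pow_left_inj₀ (norm_nonneg _) (norm_nonneg _) (pow_ne_zero n (by omega))).mp hnorm)
      rw [hab]
  -- Part 2: openness
  have hopen2 : IsOpen {K : NonemptyCompacts ↥B |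
      ∀ z ∈ (K : Set ↥B), (z : ℂ) ∈ interior B \ {z0}} := by
    rw [Metric.isOpen_iff]
    intro K hK
    have hOopen : IsOpen (Subtype.val ⁻¹' (interior B \ {z0}) : Set ↥B) :=
      (isOpen_interior.sdiff isClosed_singleton).preimage continuous_subtype_val
    have hKO : (K : Set ↥B) ⊆ Subtype.val ⁻¹' (interior B \ {z0}) := fun z hz => hK z hz
    obtain ⟨ε, hε, hthick⟩ := K.isCompact.exists_thickening_subset_open hOopen hKO
    refine ⟨ε, hε, fun L hL => ?_⟩
    intro z hz
    have hfin : EMetric.hausdorffEdist (L : Set ↥B) (K : Set ↥B) ≠ ⊤ :=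
      Metric.hausdorffEdist_ne_top_of_nonempty_of_bounded L.nonempty K.nonempty
        L.isCompact.isBounded K.isCompact.isBounded
    rw [Metric.mem_ball, NonemptyCompacts.dist_eq] at hL
    have h1 : Metric.infDist z (K : Set ↥B) < ε :=
      lt_of_le_of_lt (Metric.infDist_le_hausdorffDist_of_mem hz hfin) hL
    exact hthick ((Metric.mem_thickening_iff_infDist_lt K.nonempty).mpr h1)
  exact ⟨hdense1, hopen2, hdense1.mono fun K hK z hz => (hK.2.1 z hz).1⟩
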